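/- Let p be an odd prime, r ≥ 1, R = ℤ/p^rℤ, S = ℤ/p^{r-1}ℤ, and H the unique subgroup of R^× of order e, where e divides p−1. H acts on R and on S by multiplication (via reduction). Let ρ : R/H → S/H be the induced map on orbit spaces. Then for an orbit y ∈ S/H, the fiber ρ^{-1}(y) has cardinality 1 + (p−1)/e if y is the orbit of 0, and cardinality p otherwise. -/

import Mathlib

/-- The `H`-orbit of `x` in `R = ℤ/p^rℤ`, for `H` a subgroup of `(ℤ/p^rℤ)ˣ` acting
by multiplication. -/
def orbR {m : ℕ} (H : Subgroup (ZMod m)ˣ) (x : ZMod m) : Set (ZMod m) :=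
  Set.range fun h : H => ((h : (ZMod m)ˣ) : ZMod m) * x

set_option linter.unusedSectionVars false
set_option linter.unusedVariables false

lemma one_add_pow {A : Type*} [CommRing A] (x : A) (n : ℕ) :
    ∃ c, (1 + x) ^ n = 1 + n * x + x ^ 2 * c := by
  induction n with
  | zero => exact ⟨0, by push_cast; ring⟩
  | succ n ih =>
    obtain ⟨c, hc⟩ := ih
    exact ⟨(n : A) + c + x * c, by rw [pow_succ, hc]; push_cast; ring⟩

lemma mem_orbR_self {m : ℕ} (H' : Subgroup (ZMod m)ˣ) (x : ZMod m) : x ∈ orbR H' x :=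
  ⟨1, by simp⟩

lemma orbR_smul {m : ℕ} (H' : Subgroup (ZMod m)ˣ) (u : H') (x : ZMod m) :
    orbR H' (((u : (ZMod m)ˣ) : ZMod m) * x) = orbR H' x := by
  ext z
  constructor
  · rintro ⟨h, rfl⟩
    exact ⟨h * u, by simp [Units.val_mul, mul_assoc]⟩
  · rintro ⟨h, rfl⟩
    refine ⟨h * u⁻¹, ?_⟩
    show ((((h * u⁻¹ : H') : (ZMod m)ˣ)) : ZMod m) * (((u : (ZMod m)ˣ) : ZMod m) * x) = _
    push_cast [Units.val_mul]
    rw [mul_assoc, ← mul_assoc (((u⁻¹ : (ZMod m)ˣ)) : ZMod m), Units.inv_mul, one_mul]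

lemma orbR_zero {m : ℕ} (H' : Subgroup (ZMod m)ˣ) : orbR H' 0 = {0} := by
  ext z; simp [orbR, eq_comm]

section Aux

variable {p r e : ℕ} (hp : p.Prime) (hr : 1 ≤ r) (he : 0 < e) (hdvd : e ∣ p - 1)
  (H : Subgroup (ZMod (p ^ r))ˣ) (hH : Nat.card H = e)

-- any element of ZMod n equals cast of its val
lemma cast_val_eq {n : ℕ} [NeZero n] (a : ZMod n) : ((a.val : ℕ) : ZMod n) = a :=
  ZMod.natCast_rightInverse a

lemma cast_eq_val {n m : ℕ} [NeZero n] (h : m ∣ n) (a : ZMod n) :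
    ZMod.castHom h (ZMod m) a = ((a.val : ℕ) : ZMod m) := by
  conv_lhs => rw [← cast_val_eq a, map_natCast]

include hp he hdvd hH in
lemma unit_eq_one (u : (ZMod (p ^ r))ˣ) (hu : u ∈ H) (t : ZMod (p ^ r))
    (h1 : (u : ZMod (p ^ r)) = 1 + p * t) : u = 1 := by
  have hue : (u : ZMod (p ^ r)) ^ e = 1 := by
    have h2 : (⟨u, hu⟩ : H) ^ Nat.card H = 1 := pow_card_eq_one'
    rw [hH] at h2
    have h3 := congrArg (fun z : H => ((z : (ZMod (p ^ r))ˣ) : ZMod (p ^ r))) h2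
    simpa using h3
  obtain ⟨c, hc⟩ := one_add_pow ((p : ZMod (p ^ r)) * t) e
  rw [h1, hc] at hue
  have hz : ((p : ZMod (p ^ r)) * t) * ((e : ZMod (p ^ r)) + (p * t) * c) = 0 := by
    linear_combination hue
  have hpn : IsNilpotent (p : ZMod (p ^ r)) :=
    ⟨r, by rw [← Nat.cast_pow, ZMod.natCast_self]⟩
  have hnil : IsNilpotent ((p : ZMod (p ^ r)) * t * c) := by
    have := (Commute.all (t * c) (p : ZMod (p ^ r))).isNilpotent_mul_left hpn
    convert this using 1; ring
  have hpe : ¬ p ∣ e := by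
    intro hpe
    have hp2 := hp.two_le
    have h4 := Nat.le_of_dvd he hpe
    have h5 := Nat.le_of_dvd (by omega : 0 < p - 1) hdvd
    omega
  have hunit_e : IsUnit (e : ZMod (p ^ r)) :=
    (ZMod.isUnit_iff_coprime e (p ^ r)).mpr
      (((hp.coprime_iff_not_dvd).mpr hpe).symm.pow_right r)
  have hunit : IsUnit ((e : ZMod (p ^ r)) + (p * t) * c) :=
    IsNilpotent.isUnit_add_left_of_commute hnil hunit_e (Commute.all _ _)
  have hpt : (p : ZMod (p ^ r)) * t = 0 := by
    rwa [hunit.mul_left_eq_zero] at hz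
  exact Units.ext (by rw [h1, hpt, add_zero, Units.val_one])

include hp hr in
lemma exists_p_mul {k : ℕ} (hk : 1 ≤ k) (a : ZMod (p ^ k)) (ha : ¬ IsUnit a) :
    ∃ b, a = (p : ZMod (p ^ k)) * b := by
  haveI : NeZero (p ^ k) := ⟨pow_ne_zero _ hp.pos.ne'⟩
  have h1 : ¬ (a.val).Coprime (p ^ k) := fun h =>
    ha (by rw [← cast_val_eq a]; exact (ZMod.isUnit_iff_coprime _ _).mpr h)
  have h2 : p ∣ a.val := by
    by_contra hnd
    exact h1 (((hp.coprime_iff_not_dvd).mpr hnd).symm.pow_right k)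
  obtain ⟨c, hc⟩ := h2
  exact ⟨c, by rw [← cast_val_eq a, hc]; push_cast; ring⟩

include hp hr he hdvd hH in
lemma stab_one (u : (ZMod (p ^ r))ˣ) (hu : u ∈ H)
    (hni : ¬ IsUnit ((u : ZMod (p ^ r)) - 1)) : u = 1 := by
  obtain ⟨b, hb⟩ := exists_p_mul hp hr hr _ hni
  exact unit_eq_one hp he hdvd H hH u hu b (by linear_combination hb)


include hp hr in
lemma pp_mul_eq_iff (a b : ZMod (p ^ r)) :
    (p : ZMod (p ^ r)) ^ (r - 1) * a = (p : ZMod (p ^ r)) ^ (r - 1) * b ↔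
      ((a.val : ℕ) : ZMod p) = ((b.val : ℕ) : ZMod p) := by
  haveI : NeZero (p ^ r) := ⟨pow_ne_zero _ hp.pos.ne'⟩
  conv_lhs => rw [← cast_val_eq a, ← cast_val_eq b]
  rw [show ((p : ZMod (p ^ r)) ^ (r - 1)) = ((p ^ (r - 1) : ℕ) : ZMod (p ^ r)) by
    push_cast; ring]
  rw [← Nat.cast_mul, ← Nat.cast_mul, ZMod.natCast_eq_natCast_iff,
    ZMod.natCast_eq_natCast_iff]
  have hpr : p ^ r = p ^ (r - 1) * p := by rw [← pow_succ]; congr 1; omega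
  generalize a.val = A
  generalize b.val = B
  rw [hpr]
  exact ⟨fun h => Nat.ModEq.mul_left_cancel' (pow_ne_zero _ hp.pos.ne') h,
    fun h => Nat.ModEq.mul_left' (c := p ^ (r-1)) h⟩

include hp hr he hdvd hH in
lemma stab_R (u : (ZMod (p ^ r))ˣ) (hu : u ∈ H) (x : ZMod (p ^ r)) (hx : x ≠ 0)
    (h1 : (u : ZMod (p ^ r)) * x = x) : u = 1 := by
  have ha : ((u : ZMod (p ^ r)) - 1) * x = 0 := by linear_combination h1
  have hni : ¬ IsUnit ((u : ZMod (p ^ r)) - 1) := by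
    intro h
    exact hx (by rwa [h.mul_right_eq_zero] at ha)
  exact stab_one hp hr he hdvd H hH u hu hni

include hp hr he hdvd hH in
lemma stab_S (u : (ZMod (p ^ r))ˣ) (hu : u ∈ H) (y : ZMod (p ^ (r - 1))) (hy : y ≠ 0)
    (h1 : ZMod.castHom (pow_dvd_pow p (Nat.sub_le r 1)) (ZMod (p ^ (r - 1)))
        (u : ZMod (p ^ r)) * y = y) : u = 1 := by
  haveI : NeZero (p ^ (r - 1)) := ⟨pow_ne_zero _ hp.pos.ne'⟩
  set π := ZMod.castHom (pow_dvd_pow p (Nat.sub_le r 1)) (ZMod (p ^ (r - 1))) with hπ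
  have hr2 : 1 ≤ r - 1 := by
    by_contra h
    apply hy
    have hval := ZMod.val_lt y
    have hone : p ^ (r - 1) = 1 := by rw [show r - 1 = 0 by omega, pow_zero]
    rw [← cast_val_eq y, show y.val = 0 by omega, Nat.cast_zero]
  have ha : (π (u : ZMod (p ^ r)) - 1) * y = 0 := by linear_combination h1
  have hniS : ¬ IsUnit (π (u : ZMod (p ^ r)) - 1) := fun h =>
    hy (by rwa [h.mul_right_eq_zero] at ha)
  have hniR : ¬ IsUnit ((u : ZMod (p ^ r)) - 1) := by
    intro h
    have h3 := h.map π
    rw [map_sub, map_one] at h3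
    exact hniS h3
  exact stab_one hp hr he hdvd H hH u hu hniR

include hp hr he hdvd hH in
lemma eq_one_of_cast (u : (ZMod (p ^ r))ˣ) (hu : u ∈ H) (hdp : p ∣ p ^ r)
    (h1 : ZMod.castHom hdp (ZMod p) (u : ZMod (p ^ r)) = 1) : u = 1 := by
  haveI : Fact p.Prime := ⟨hp⟩
  have h2 : ZMod.castHom hdp (ZMod p) ((u : ZMod (p ^ r)) - 1) = 0 := by
    rw [map_sub, map_one, h1, sub_self]
  have hni : ¬ IsUnit ((u : ZMod (p ^ r)) - 1) := by
    intro h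
    have h3 := h.map (ZMod.castHom hdp (ZMod p))
    rw [h2] at h3
    exact not_isUnit_zero h3
  exact stab_one hp hr he hdvd H hH u hu hni

end Aux

/-- Let `p` be an odd prime, `r ≥ 1`, `R = ℤ/p^rℤ`, `S = ℤ/p^(r−1)ℤ`,
and `H` the (unique) subgroup of `Rˣ` of order `e`, with `e ∣ p−1`; `H` acts on `R`
and (via the reduction `π`) on `S`, and `ρ : R/H → S/H` is the induced map on orbit
spaces.  For an orbit `y ∈ S/H` (the orbit of an element `y`), the fiber `ρ⁻¹(orbit
of y)` has `1 + (p−1)/e` elements if `y = 0`, and `p` elements otherwise.  The fiber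
is encoded as the set of `H`-orbits `O ⊆ R` with `π '' O` contained in the `H`-orbit
of `y`. -/
theorem stmt2 (p r e : ℕ) (hp : p.Prime) (hodd : Odd p) (hr : 1 ≤ r)
    (he : 0 < e) (hdvd : e ∣ p - 1)
    (H : Subgroup (ZMod (p ^ r))ˣ) (hH : Nat.card H = e)
    (y : ZMod (p ^ (r - 1))) :
    Nat.card {O : Set (ZMod (p ^ r)) //
        (∃ x, O = orbR H x) ∧
        (ZMod.castHom (pow_dvd_pow p (Nat.sub_le r 1)) (ZMod (p ^ (r - 1)))) '' O ⊆
          Set.range fun h : H =>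
            ZMod.castHom (pow_dvd_pow p (Nat.sub_le r 1)) (ZMod (p ^ (r - 1)))
              ((h : (ZMod (p ^ r))ˣ) : ZMod (p ^ r)) * y} =
      if y = 0 then 1 + (p - 1) / e else p := by
  haveI : Fact p.Prime := ⟨hp⟩
  haveI : NeZero (p ^ r) := ⟨pow_ne_zero _ hp.pos.ne'⟩
  haveI : NeZero (p ^ (r - 1)) := ⟨pow_ne_zero _ hp.pos.ne'⟩
  set π := ZMod.castHom (pow_dvd_pow p (Nat.sub_le r 1)) (ZMod (p ^ (r - 1))) with hπ
  by_cases hy : y = 0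
  · rw [if_pos hy]
    subst hy
    have hr0 : r ≠ 0 := by omega
    have hdp : p ∣ p ^ r := dvd_pow_self p hr0
    set φ : ZMod (p ^ r) →+* ZMod p := ZMod.castHom hdp (ZMod p) with hφ
    set Φ : (ZMod (p ^ r))ˣ →* (ZMod p)ˣ := Units.map φ.toMonoidHom with hΦ
    set Hb : Subgroup (ZMod p)ˣ := H.map Φ with hHb
    set pp : ZMod (p ^ r) := (p : ZMod (p ^ r)) ^ (r - 1) with hpp
    set lf : (ZMod p)ˣ → ZMod (p ^ r) :=
      fun u => (((u : ZMod p).val : ℕ) : ZMod (p ^ r)) with hlf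
    have hφlift : ∀ u : (ZMod p)ˣ, φ (lf u) = (u : ZMod p) := by
      intro u
      rw [hlf]
      simp only [map_natCast]
      exact cast_val_eq _
    have hA : ∀ a b : ZMod (p ^ r), pp * a = pp * b ↔ φ a = φ b := by
      intro a b
      rw [hpp, pp_mul_eq_iff hp hr, hφ, cast_eq_val hdp a, cast_eq_val hdp b]
    have hppS : ((p : ZMod (p ^ (r - 1)))) ^ (r - 1) = 0 := by
      rw [← Nat.cast_pow, ZMod.natCast_self]
    have hker : ∀ a : ZMod (p ^ r), π (pp * a) = 0 := by
      intro a
      rw [hpp, map_mul, map_pow, map_natCast, hppS, zero_mul]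
    have hsubmem : ∀ x : ZMod (p ^ r), π x = 0 →
        (∃ x', orbR H x = orbR H x') ∧ π '' (orbR H x) ⊆ Set.range (fun h : H =>
          π ((h : (ZMod (p ^ r))ˣ) : ZMod (p ^ r)) * (0 : ZMod (p ^ (r - 1)))) := by
      intro x hx
      refine ⟨⟨x, rfl⟩, ?_⟩
      rintro - ⟨-, ⟨h', rfl⟩, rfl⟩
      exact ⟨h', by simp [hx]⟩
    have wd : ∀ a b : (ZMod p)ˣ, @Setoid.r _ (QuotientGroup.leftRel Hb) a b →
        orbR H (pp * lf a) = orbR H (pp * lf b) := by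
      intro a b hab
      rw [QuotientGroup.leftRel_apply] at hab
      obtain ⟨h₀, hh₀, hmap⟩ := Subgroup.mem_map.mp hab
      have hbeq : (b : ZMod p) = φ ((h₀ : (ZMod (p ^ r))ˣ) : ZMod (p ^ r)) * (a : ZMod p) := by
        have h1 : b = a * Φ h₀ := by rw [hmap]; group
        rw [h1, Units.val_mul]
        have h2 : ((Φ h₀ : (ZMod p)ˣ) : ZMod p) = φ ((h₀ : (ZMod (p ^ r))ˣ) : ZMod (p ^ r)) := rfl
        rw [h2]; ring
      have h3 : pp * lf b = ((h₀ : (ZMod (p ^ r))ˣ) : ZMod (p ^ r)) * (pp * lf a) := by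
        rw [mul_left_comm]
        rw [hA]
        rw [hφlift, map_mul, hφlift, hbeq]
      rw [h3, orbR_smul H (⟨h₀, hh₀⟩ : H) (pp * lf a)]
    let Q := (ZMod p)ˣ ⧸ Hb
    let g : Option Q → {O : Set (ZMod (p ^ r)) //
        (∃ x, O = orbR H x) ∧ π '' O ⊆ Set.range fun h : H =>
          π ((h : (ZMod (p ^ r))ˣ) : ZMod (p ^ r)) * (0 : ZMod (p ^ (r - 1)))} :=
      fun o => o.elim ⟨orbR H 0, hsubmem 0 (map_zero π)⟩
        (fun q => Quotient.liftOn' q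
          (fun u => ⟨orbR H (pp * lf u), hsubmem _ (hker _)⟩)
          (fun a b hab => Subtype.ext (wd a b hab)))
    have hg : Function.Bijective g := by
      constructor
      · have hne : ∀ u : (ZMod p)ˣ, orbR H 0 ≠ orbR H (pp * lf u) := by
          intro u hcon
          have hmem : pp * lf u ∈ orbR H 0 := hcon ▸ mem_orbR_self H (pp * lf u)
          rw [orbR_zero] at hmem
          have h0 : pp * lf u = pp * 0 := by rw [mul_zero]; exact hmem
          rw [hA, hφlift, map_zero] at h0
          exact Units.ne_zero u h0
        intro o o' hoo
        match o, o' with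
        | none, none => rfl
        | none, some q =>
          exfalso
          induction q using Quotient.inductionOn' with
          | h u => exact hne u (congrArg Subtype.val hoo)
        | some q, none =>
          exfalso
          induction q using Quotient.inductionOn' with
          | h u => exact hne u (congrArg Subtype.val hoo).symm
        | some q, some q' =>
          induction q using Quotient.inductionOn' with
          | h a =>
            induction q' using Quotient.inductionOn' with
            | h b =>
              have horb : orbR H (pp * lf a) = orbR H (pp * lf b) :=
                congrArg Subtype.val hoo
              obtain ⟨h, hh⟩ : pp * lf b ∈ orbR H (pp * lf a) :=
                horb ▸ mem_orbR_self H (pp * lf b)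
              have hh' : ((h : (ZMod (p ^ r))ˣ) : ZMod (p ^ r)) * (pp * lf a) = pp * lf b := hh
              have h4 : pp * (((h : (ZMod (p ^ r))ˣ) : ZMod (p ^ r)) * lf a) = pp * lf b := by
                rw [← hh']; ring
              rw [hA, map_mul, hφlift, hφlift] at h4
              congr 1
              apply Quotient.sound'
              rw [QuotientGroup.leftRel_apply]
              refine Subgroup.mem_map.mpr ⟨(h : (ZMod (p ^ r))ˣ), h.2, ?_⟩
              apply Units.ext
              rw [Units.val_mul]
              have h5 : ((Φ (h : (ZMod (p ^ r))ˣ) : (ZMod p)ˣ) : ZMod p) =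
                φ ((h : (ZMod (p ^ r))ˣ) : ZMod (p ^ r)) := rfl
              rw [h5, ← h4]
              have h6 : ((a⁻¹ : (ZMod p)ˣ) : ZMod p) * ((a : (ZMod p)ˣ) : ZMod p) = 1 :=
                Units.inv_mul a
              calc φ ((h : (ZMod (p ^ r))ˣ) : ZMod (p ^ r)) =
                    φ ((h : (ZMod (p ^ r))ˣ) : ZMod (p ^ r)) *
                      (((a⁻¹ : (ZMod p)ˣ) : ZMod p) * ((a : (ZMod p)ˣ) : ZMod p)) := by
                    rw [h6, mul_one]
                _ = ((a⁻¹ : (ZMod p)ˣ) : ZMod p) *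
                      (φ ((h : (ZMod (p ^ r))ˣ) : ZMod (p ^ r)) * ((a : (ZMod p)ˣ) : ZMod p)) := by
                    ring
      · rintro ⟨O, ⟨x, hx⟩, hsub⟩
        have hpix : π x = 0 := by
          have hmem : π x ∈ π '' O := ⟨x, by rw [hx]; exact mem_orbR_self H x, rfl⟩
          obtain ⟨h, hh⟩ := hsub hmem
          have hh' : π (((h : H) : (ZMod (p ^ r))ˣ) : ZMod (p ^ r)) * 0 = π x := hh
          rw [mul_zero] at hh'
          exact hh'.symm
        have hd : ((x.val : ℕ) : ZMod (p ^ (r - 1))) = 0 := by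
          rw [← cast_eq_val (pow_dvd_pow p (Nat.sub_le r 1)) x, ← hπ]
          exact hpix
        have hdvd' : p ^ (r - 1) ∣ x.val := (ZMod.natCast_eq_zero_iff _ _).mp hd
        set m := x.val / p ^ (r - 1) with hm
        have hmd : p ^ (r - 1) * m = x.val := Nat.mul_div_cancel' hdvd'
        have hmp : m < p := by
          rw [hm, Nat.div_lt_iff_lt_mul (pow_pos hp.pos _)]
          calc x.val < p ^ r := ZMod.val_lt _
            _ = p * p ^ (r - 1) := by rw [← pow_succ']; congr 1; omega
        have hxm : x = pp * ((m : ℕ) : ZMod (p ^ r)) := by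
          rw [← cast_val_eq x, ← hmd, hpp]; push_cast; ring
        by_cases hpm : p ∣ m
        · have hm0 : m = 0 := Nat.eq_zero_of_dvd_of_lt hpm hmp
          refine ⟨none, Subtype.ext ?_⟩
          show orbR H 0 = O
          rw [hx, show x = (0 : ZMod (p ^ r)) from by
            rw [hxm, hm0, Nat.cast_zero, mul_zero]]
        · have cop : m.Coprime p := (hp.coprime_iff_not_dvd.mpr hpm).symm
          set u : (ZMod p)ˣ := ZMod.unitOfCoprime m cop with hu
          refine ⟨some (QuotientGroup.mk u), Subtype.ext ?_⟩
          show orbR H (pp * lf u) = O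
          have hlfu : lf u = ((m : ℕ) : ZMod (p ^ r)) := by
            have h7 : ((u : ZMod p)) = ((m : ℕ) : ZMod p) := ZMod.coe_unitOfCoprime m cop
            show ((((u : ZMod p)).val : ℕ) : ZMod (p ^ r)) = ((m : ℕ) : ZMod (p ^ r))
            rw [h7, ZMod.val_cast_of_lt hmp]
          rw [hlfu, ← hxm, hx]
    rw [Nat.card_congr (Equiv.ofBijective g hg).symm]
    haveI : Finite Q := Quotient.finite _
    haveI := Fintype.ofFinite Q
    rw [Nat.card_eq_fintype_card, Fintype.card_option]
    have hcb : Nat.card Hb = e := by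
      rw [← hH]
      apply Nat.card_congr
      refine (Equiv.ofBijective (fun h : H => (⟨Φ (h : (ZMod (p ^ r))ˣ),
        Subgroup.mem_map.mpr ⟨(h : (ZMod (p ^ r))ˣ), h.2, rfl⟩⟩ : Hb)) ⟨?_, ?_⟩).symm
      · intro a b hab
        have h1 : Φ ((a : (ZMod (p ^ r))ˣ) * (b : (ZMod (p ^ r))ˣ)⁻¹) = 1 := by
          have h2 : Φ (a : (ZMod (p ^ r))ˣ) = Φ (b : (ZMod (p ^ r))ˣ) :=
            congrArg Subtype.val hab
          rw [map_mul, map_inv, h2, mul_inv_cancel]  -- check names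
        have h3 : φ (((a : (ZMod (p ^ r))ˣ) * (b : (ZMod (p ^ r))ˣ)⁻¹ :
            (ZMod (p ^ r))ˣ) : ZMod (p ^ r)) = 1 := by
          have := congrArg Units.val h1
          exact this
        have h4 := eq_one_of_cast hp hr he hdvd H hH _
          (mul_mem a.2 (inv_mem b.2)) hdp h3
        have h5 : (a : (ZMod (p ^ r))ˣ) = (b : (ZMod (p ^ r))ˣ) := by
          have := mul_eq_one_iff_eq_inv.mp h4
          simpa using this
        exact Subtype.ext h5
      · rintro ⟨b, hb⟩
        obtain ⟨v, hv, rfl⟩ := Subgroup.mem_map.mp hb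
        exact ⟨⟨v, hv⟩, rfl⟩
    have hG : Nat.card (ZMod p)ˣ = p - 1 := by
      rw [Nat.card_eq_fintype_card, ZMod.card_units_eq_totient, Nat.totient_prime hp]
    have hlag := Subgroup.card_mul_index Hb
    rw [hcb, hG] at hlag
    have hidx : Nat.card Q = Hb.index := (Subgroup.index_eq_card Hb).symm
    have hdiv : (p - 1) / e = Hb.index :=
      Nat.div_eq_of_eq_mul_left he (by rw [← hlag]; ring)
    show Fintype.card Q + 1 = 1 + (p - 1) / e
    rw [← Nat.card_eq_fintype_card, hidx, ← hdiv, add_comm]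
  · rw [if_neg hy]
    -- step 1: the fiber is in bijection with {x // π x = y}
    have hmem : ∀ x : ZMod (p ^ r), π x = y →
        (∃ x', orbR H x = orbR H x') ∧ π '' (orbR H x) ⊆ Set.range (fun h : H =>
          π ((h : (ZMod (p ^ r))ˣ) : ZMod (p ^ r)) * y) := by
      intro x hx
      refine ⟨⟨x, rfl⟩, ?_⟩
      rintro - ⟨-, ⟨h, rfl⟩, rfl⟩
      exact ⟨h, by rw [map_mul, hx]⟩
    let f : {x : ZMod (p ^ r) // π x = y} → {O : Set (ZMod (p ^ r)) //
        (∃ x, O = orbR H x) ∧ π '' O ⊆ Set.range fun h : H =>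
          π ((h : (ZMod (p ^ r))ˣ) : ZMod (p ^ r)) * y} :=
      fun x => ⟨orbR H x.1, hmem x.1 x.2⟩
    have hf : Function.Bijective f := by
      constructor
      · rintro ⟨x, hx⟩ ⟨x', hx'⟩ hxx
        have horb : orbR H x = orbR H x' := congrArg Subtype.val hxx
        obtain ⟨h, hh⟩ : x' ∈ orbR H x := horb ▸ mem_orbR_self H x'
        have hh' : ((h : (ZMod (p ^ r))ˣ) : ZMod (p ^ r)) * x = x' := hh
        have hsy : π ((h : (ZMod (p ^ r))ˣ) : ZMod (p ^ r)) * y = y := by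
          have := congrArg π hh'
          rw [map_mul, hx, hx'] at this
          exact this
        have h1 : (h : (ZMod (p ^ r))ˣ) = 1 :=
          stab_S hp hr he hdvd H hH _ h.2 y hy (by rw [← hπ]; exact hsy)
        apply Subtype.ext
        show x = x'
        rw [← hh', h1, Units.val_one, one_mul]
      · rintro ⟨O, ⟨x, hx⟩, hsub⟩
        have hpix : π x ∈ π '' O := ⟨x, by rw [hx]; exact mem_orbR_self H x, rfl⟩
        obtain ⟨h, hh⟩ := hsub hpix
        have hh' : π (((h : H) : (ZMod (p ^ r))ˣ) : ZMod (p ^ r)) * y = π x := hh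
        have hinv : (((h⁻¹ : H) : (ZMod (p ^ r))ˣ) : ZMod (p ^ r)) *
            (((h : H) : (ZMod (p ^ r))ˣ) : ZMod (p ^ r)) = 1 := by
          push_cast
          exact Units.inv_mul _
        refine ⟨⟨(((h⁻¹ : H) : (ZMod (p ^ r))ˣ) : ZMod (p ^ r)) * x, ?_⟩, ?_⟩
        · rw [map_mul, ← hh', ← mul_assoc, ← map_mul, hinv, map_one, one_mul]
        · apply Subtype.ext
          show orbR H _ = O
          rw [hx]
          exact orbR_smul H h⁻¹ x
    rw [← Nat.card_congr (Equiv.ofBijective f hf)]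
    -- step 2: {x // π x = y} is in bijection with ZMod p
    let g : ZMod p → {x : ZMod (p ^ r) // π x = y} := fun k =>
      ⟨(y.val : ZMod (p ^ r)) + (p : ZMod (p ^ r)) ^ (r - 1) * ((k.val : ℕ) : ZMod (p ^ r)),
        by
          simp only [map_add, map_mul, map_pow, map_natCast]
          rw [cast_val_eq y, show ((p : ZMod (p ^ (r - 1)))) ^ (r - 1) = 0 by
            rw [← Nat.cast_pow, ZMod.natCast_self], zero_mul, add_zero]⟩
    have hg : Function.Bijective g := by
      constructor
      · intro k k' hkk
        have h1 : (p : ZMod (p ^ r)) ^ (r - 1) * ((k.val : ℕ) : ZMod (p ^ r)) =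
            (p : ZMod (p ^ r)) ^ (r - 1) * ((k'.val : ℕ) : ZMod (p ^ r)) := by
          have := congrArg Subtype.val hkk
          simpa [g] using this
        rw [pp_mul_eq_iff hp hr] at h1
        have hlt : k.val < p ^ r := lt_of_lt_of_le (ZMod.val_lt k)
          (Nat.le_self_pow (by omega) p)
        have hlt' : k'.val < p ^ r := lt_of_lt_of_le (ZMod.val_lt k')
          (Nat.le_self_pow (by omega) p)
        rw [ZMod.val_cast_of_lt hlt, ZMod.val_cast_of_lt hlt'] at h1
        rw [← cast_val_eq k, ← cast_val_eq k', h1]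
      · rintro ⟨x, hx⟩
        have hd : π (x - (y.val : ZMod (p ^ r))) = 0 := by
          rw [map_sub, hx, map_natCast, cast_val_eq y, sub_self]
        rw [cast_eq_val _ _] at hd
        have hdvd' : p ^ (r - 1) ∣ (x - (y.val : ZMod (p ^ r))).val :=
          (ZMod.natCast_eq_zero_iff _ _).mp hd
        set m := (x - (y.val : ZMod (p ^ r))).val / p ^ (r - 1) with hm
        have hmd : p ^ (r - 1) * m = (x - (y.val : ZMod (p ^ r))).val :=
          Nat.mul_div_cancel' hdvd'
        have hmp : m < p := by
          rw [hm]
          rw [Nat.div_lt_iff_lt_mul (pow_pos hp.pos _)]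
          calc (x - (y.val : ZMod (p ^ r))).val < p ^ r := ZMod.val_lt _
          _ = p * p ^ (r - 1) := by rw [← pow_succ']; congr 1; omega
        refine ⟨(m : ZMod p), Subtype.ext ?_⟩
        show (y.val : ZMod (p ^ r)) + (p : ZMod (p ^ r)) ^ (r - 1) *
          (((m : ZMod p).val : ℕ) : ZMod (p ^ r)) = x
        rw [ZMod.val_cast_of_lt hmp]
        have h2 : (p : ZMod (p ^ r)) ^ (r - 1) * ((m : ℕ) : ZMod (p ^ r)) =
            (((x - (y.val : ZMod (p ^ r))).val : ℕ) : ZMod (p ^ r)) := by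
          rw [← hmd]; push_cast; ring
        rw [h2, cast_val_eq]
        ring
    rw [Nat.card_congr (Equiv.ofBijective g hg).symm, Nat.card_zmod]
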